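/- Let f : E → ℝ be differentiable with f(x) ≥ f* for all x ∈ E. Fix an integer p ≥ 1 and constants L > 0, Δ > 0. Let (x_k)_{k≥0} be a sequence in E such that for every k there exists h_k : E → ℝ with: h_k has L-Lipschitz p-th derivative; h_k(x_k) = 0 and D^i h_k(x_k) = 0 for i = 1, …, p; h_k(y) ≥ Δ·‖y − x_k‖^{p+1} for all y ∈ E; and x_{k+1} satisfies ∇f(x_{k+1}) + ∇h_k(x_{k+1}) = 0 and f(x_{k+1}) + h_k(x_{k+1}) ≤ f(x_k). Then for every k ≥ 1: min_{i=1,…,k} ‖∇f(x_i)‖ ≤ (L/p!) · ( (f(x_0) − f*) / (k·Δ) )^{p/(p+1)}. -/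

import Mathlib

open scoped RealInnerProductSpace BigOperators

variable {E : Type*} [NormedAddCommGroup E] [InnerProductSpace ℝ E] [FiniteDimensional ℝ E]

/-- `ψ : E → ℝ` is `p` times continuously differentiable and its `p`-th Fréchet
derivative is `L`-Lipschitz. -/
def HasLipschitzDerivOfOrder (p : ℕ) (L : ℝ) (ψ : E → ℝ) : Prop :=
  ContDiff ℝ p ψ ∧
    ∀ x y : E, ‖iteratedFDeriv ℝ p ψ x - iteratedFDeriv ℝ p ψ y‖ ≤ L * ‖x - y‖

/-- Integration along a segment: if `g` vanishes at `x₀` and its derivative is bounded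
by `C‖z - x₀‖^m`, then `‖g y‖ ≤ C‖y - x₀‖^(m+1)/(m+1)`. -/
lemma seg_bound {F : Type*} [NormedAddCommGroup F] [NormedSpace ℝ F]
    (g : E → F) (hg : Differentiable ℝ g) (x₀ : E) (hg0 : g x₀ = 0)
    (C : ℝ) (m : ℕ) (hbd : ∀ z : E, ‖fderiv ℝ g z‖ ≤ C * ‖z - x₀‖ ^ m) (y : E) :
    ‖g y‖ ≤ C * ‖y - x₀‖ ^ (m + 1) / (m + 1) := by
  set v := y - x₀ with hv
  have hm1 : ((m : ℝ) + 1) ≠ 0 := by positivity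
  have hu' : ∀ t : ℝ, HasDerivAt (fun t : ℝ => g (x₀ + t • v))
      (fderiv ℝ g (x₀ + t • v) v) t := by
    intro t
    have h1 : HasDerivAt (fun t : ℝ => x₀ + t • v) v t := by
      simpa using ((hasDerivAt_id t).smul_const v).const_add x₀
    exact (hg _).hasFDerivAt.comp_hasDerivAt t h1
  have hB : ∀ t : ℝ, HasDerivAt (fun t : ℝ => C * ‖v‖ ^ (m + 1) / (m + 1) * t ^ (m + 1))
      (C * ‖v‖ ^ (m + 1) * t ^ m) t := by
    intro t
    have := (hasDerivAt_pow (m + 1) t).const_mul (C * ‖v‖ ^ (m + 1) / (m + 1))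
    refine this.congr_deriv ?_
    rw [Nat.add_sub_cancel]
    push_cast
    rw [div_mul_eq_mul_div, div_eq_iff hm1]
    ring
  have key := image_norm_le_of_norm_deriv_right_le_deriv_boundary
    (f := fun t : ℝ => g (x₀ + t • v)) (a := 0) (b := 1)
    (f' := fun t : ℝ => fderiv ℝ g (x₀ + t • v) v)
    (fun t _ => (hu' t).continuousAt.continuousWithinAt)
    (fun t _ => (hu' t).hasDerivWithinAt)
    (B := fun t : ℝ => C * ‖v‖ ^ (m + 1) / (m + 1) * t ^ (m + 1))
    (B' := fun t : ℝ => C * ‖v‖ ^ (m + 1) * t ^ m)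
    (by simp [hg0]) hB
    (by
      intro t ht
      have ht0 : (0 : ℝ) ≤ t := ht.1
      have h1 : ‖fderiv ℝ g (x₀ + t • v) v‖ ≤ ‖fderiv ℝ g (x₀ + t • v)‖ * ‖v‖ :=
        (fderiv ℝ g (x₀ + t • v)).le_opNorm v
      have h2 : ‖fderiv ℝ g (x₀ + t • v)‖ ≤ C * ‖t • v‖ ^ m := by
        simpa using hbd (x₀ + t • v)
      calc ‖fderiv ℝ g (x₀ + t • v) v‖ ≤ C * ‖t • v‖ ^ m * ‖v‖ :=
            h1.trans (by
              have : (0 : ℝ) ≤ ‖v‖ := norm_nonneg _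
              exact mul_le_mul_of_nonneg_right h2 this)
        _ = C * ‖v‖ ^ (m + 1) * t ^ m := by
            rw [norm_smul, Real.norm_eq_abs, abs_of_nonneg ht0, mul_pow]
            ring)
  have h1v : x₀ + v = y := by rw [hv]; abel
  have := key (x := 1) (by norm_num)
  simpa [h1v] using this

/-- If all derivatives of orders `1,…,p` of `ψ` vanish at `x₀` and the `p`-th derivative
is `L`-Lipschitz, then `‖∇ψ(y)‖ ≤ L/p! ‖y - x₀‖^p`. -/
lemma grad_bound (ψ : E → ℝ) (p : ℕ) (hp : 1 ≤ p) (L : ℝ)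
    (hψ : HasLipschitzDerivOfOrder p L ψ) (x₀ : E)
    (h0 : ∀ i : ℕ, 1 ≤ i → i ≤ p → iteratedFDeriv ℝ i ψ x₀ = 0) (y : E) :
    ‖gradient ψ y‖ ≤ L / (Nat.factorial p : ℝ) * ‖y - x₀‖ ^ p := by
  obtain ⟨hcd, hlip⟩ := hψ
  have claim : ∀ m : ℕ, m ≤ p - 1 → ∀ z : E,
      ‖iteratedFDeriv ℝ (p - m) ψ z‖ ≤
        L / (Nat.factorial (m + 1) : ℝ) * ‖z - x₀‖ ^ (m + 1) := by
    intro m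
    induction m with
    | zero =>
      intro _ z
      have := hlip z x₀
      rw [h0 p hp le_rfl, sub_zero] at this
      simpa [Nat.factorial] using this
    | succ m ih =>
      intro hm z
      have hmp : m + 1 ≤ p - 1 := hm
      have hsub : p - (m + 1) + 1 = p - m := by omega
      have hdg : Differentiable ℝ (iteratedFDeriv ℝ (p - (m + 1)) ψ) := by
        apply hcd.differentiable_iteratedFDeriv
        exact_mod_cast Nat.cast_lt.mpr (by omega : p - (m + 1) < p)
      have hg0 : iteratedFDeriv ℝ (p - (m + 1)) ψ x₀ = 0 :=
        h0 _ (by omega) (by omega)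
      have hbd : ∀ w : E, ‖fderiv ℝ (iteratedFDeriv ℝ (p - (m + 1)) ψ) w‖ ≤
          L / (Nat.factorial (m + 1) : ℝ) * ‖w - x₀‖ ^ (m + 1) := by
        intro w
        rw [norm_fderiv_iteratedFDeriv, hsub]
        exact ih (by omega) w
      have := seg_bound (iteratedFDeriv ℝ (p - (m + 1)) ψ) hdg x₀ hg0
        (L / (Nat.factorial (m + 1) : ℝ)) (m + 1) hbd z
      refine this.trans (le_of_eq ?_)
      have hfac : (Nat.factorial (m + 2) : ℝ) = (m + 2) * Nat.factorial (m + 1) := by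
        rw [Nat.factorial_succ]; push_cast; ring
      have hf1 : (Nat.factorial (m + 1) : ℝ) ≠ 0 := by
        exact_mod_cast Nat.factorial_ne_zero (m + 1)
      have hm2 : ((m : ℝ) + 2) ≠ 0 := by positivity
      rw [hfac, show (((m + 1 : ℕ) : ℝ) + 1) = (m : ℝ) + 2 by push_cast; ring]
      rw [div_mul_eq_mul_div, div_div, div_mul_eq_mul_div, mul_comm ((m : ℝ) + 2)]
  have h1 := claim (p - 1) le_rfl y
  have hpp : p - (p - 1) = 1 := by omega
  have hpp' : p - 1 + 1 = p := by omega
  rw [hpp, hpp'] at h1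
  have hnorm : ‖gradient ψ y‖ = ‖iteratedFDeriv ℝ 1 ψ y‖ := by
    rw [← norm_iteratedFDeriv_fderiv (n := 0), norm_iteratedFDeriv_zero]
    simp only [gradient, LinearIsometryEquiv.norm_map]
  rw [hnorm]
  exact h1

/-- Sublinear convergence rate of GHOM in terms of first-order optimality conditions
for (possibly nonconvex) objectives, under the strengthened error-function lower bound
`h_k(y) ≥ Δ‖y - x_k‖^{p+1}`. -/
theorem ghom_nonconvex_first_order_rate
    (f : E → ℝ) (hdiff : Differentiable ℝ f)
    (fstar : ℝ) (hbound : ∀ z : E, fstar ≤ f z)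
    (p : ℕ) (hp : 1 ≤ p) (L Δ : ℝ) (hL : 0 < L) (hΔ : 0 < Δ)
    (x : ℕ → E)
    (hstep : ∀ k : ℕ, ∃ h : E → ℝ,
      HasLipschitzDerivOfOrder p L h ∧
      h (x k) = 0 ∧
      (∀ i : ℕ, 1 ≤ i → i ≤ p → iteratedFDeriv ℝ i h (x k) = 0) ∧
      (∀ y : E, Δ * ‖y - x k‖ ^ (p + 1) ≤ h y) ∧
      gradient f (x (k + 1)) + gradient h (x (k + 1)) = 0 ∧
      f (x (k + 1)) + h (x (k + 1)) ≤ f (x k)) :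
    ∀ k : ℕ, ∀ hk : 1 ≤ k,
      (Finset.Icc 1 k).inf' (Finset.nonempty_Icc.mpr hk)
          (fun i => ‖gradient f (x i)‖) ≤
        L / (Nat.factorial p : ℝ) *
          ((f (x 0) - fstar) / ((k : ℝ) * Δ)) ^ ((p : ℝ) / ((p : ℝ) + 1)) := by
  intro k hk
  set r : ℕ → ℝ := fun i => ‖x (i + 1) - x i‖ with hr
  -- basic facts for each step
  have hdec : ∀ i : ℕ, f (x (i + 1)) + Δ * r i ^ (p + 1) ≤ f (x i) := by
    intro i
    obtain ⟨h, _, _, _, hlow, _, hdesc⟩ := hstep i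
    have := hlow (x (i + 1))
    linarith
  have hgrad : ∀ i : ℕ, ‖gradient f (x (i + 1))‖ ≤
      L / (Nat.factorial p : ℝ) * r i ^ p := by
    intro i
    obtain ⟨h, hlipd, _, hvanish, _, hopt, _⟩ := hstep i
    have heq : gradient f (x (i + 1)) = -gradient h (x (i + 1)) :=
      eq_neg_of_add_eq_zero_left hopt
    rw [heq, norm_neg]
    exact grad_bound h p hp L hlipd (x i) hvanish (x (i + 1))
  have hk0 : (0 : ℝ) < (k : ℝ) := by exact_mod_cast hk
  -- telescoping sum
  have hsum : Δ * ∑ i ∈ Finset.range k, r i ^ (p + 1) ≤ f (x 0) - fstar := by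
    have h1 : ∑ i ∈ Finset.range k, Δ * r i ^ (p + 1) ≤
        ∑ i ∈ Finset.range k, (f (x i) - f (x (i + 1))) :=
      Finset.sum_le_sum fun i _ => by linarith [hdec i]
    rw [Finset.sum_range_sub' (fun i => f (x i))] at h1
    rw [Finset.mul_sum]
    have := hbound (x k)
    linarith
  -- index of smallest step
  obtain ⟨i0, hi0mem, hi0min⟩ := Finset.exists_min_image (Finset.range k)
    (fun i => r i ^ (p + 1)) ⟨0, Finset.mem_range.mpr (by omega)⟩
  have hmin : (k : ℝ) * r i0 ^ (p + 1) ≤ ∑ i ∈ Finset.range k, r i ^ (p + 1) := by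
    have := Finset.card_nsmul_le_sum (Finset.range k) (fun i => r i ^ (p + 1))
      (r i0 ^ (p + 1)) fun j hj => hi0min j hj
    simpa [Finset.card_range, nsmul_eq_mul] using this
  set S : ℝ := (f (x 0) - fstar) / ((k : ℝ) * Δ) with hSdef
  have hS : r i0 ^ (p + 1) ≤ S := by
    have h2 : Δ * ((k : ℝ) * r i0 ^ (p + 1)) ≤ Δ * ∑ i ∈ Finset.range k, r i ^ (p + 1) :=
      mul_le_mul_of_nonneg_left hmin hΔ.le
    rw [hSdef, le_div_iff₀ (mul_pos hk0 hΔ)]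
    nlinarith
  have hS0 : 0 ≤ S := by
    have := hbound (x 0)
    exact div_nonneg (by linarith) (by positivity)
  have hrpow : r i0 ^ p ≤ S ^ ((p : ℝ) / ((p : ℝ) + 1)) := by
    have hr0 : (0 : ℝ) ≤ r i0 := norm_nonneg _
    have hexp : ((p : ℝ) + 1) * ((p : ℝ) / ((p : ℝ) + 1)) = (p : ℝ) := by
      field_simp
    have hcalc : r i0 ^ p = (r i0 ^ (p + 1)) ^ ((p : ℝ) / ((p : ℝ) + 1)) := by
      rw [← Real.rpow_natCast (r i0) (p + 1), ← Real.rpow_mul hr0]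
      push_cast
      rw [hexp, Real.rpow_natCast]
    rw [hcalc]
    exact Real.rpow_le_rpow (by positivity) hS (by positivity)
  have hmem : i0 + 1 ∈ Finset.Icc 1 k :=
    Finset.mem_Icc.mpr ⟨Nat.le_add_left 1 i0, Nat.succ_le_of_lt (Finset.mem_range.mp hi0mem)⟩
  have hinf := Finset.inf'_le (f := fun i => ‖gradient f (x i)‖) hmem
  refine le_trans hinf ?_
  have hfacpos : (0 : ℝ) < (Nat.factorial p : ℝ) := by
    exact_mod_cast Nat.factorial_pos p
  calc ‖gradient f (x (i0 + 1))‖ ≤ L / (Nat.factorial p : ℝ) * r i0 ^ p := hgrad i0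
    _ ≤ L / (Nat.factorial p : ℝ) * S ^ ((p : ℝ) / ((p : ℝ) + 1)) :=
        mul_le_mul_of_nonneg_left hrpow (by positivity)
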